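/- arXiv:1006.3605 — 3 statements merged into one kernel-verified Lean document; each statement's English description precedes it below -/
import Mathlib

section
/- Let λ > 0, let m ≥ 0 be an integer and ℓ ≥ 0 a real number, and set p(k) = λ|k|²/(1+|k|²)² for k ∈ ℝ³. Then there exists a constant C > 0 such that for every measurable function F : ℝ³ → [0, ∞] and every t ≥ 0, ∫_{ℝ³} |k|^{2m} e^{-p(k) t} F(k) dk ≤ C (1+t)^{-3/2 - m} · ess sup_{|k| ≤ 1} F(k) + C (1+t)^{-ℓ} ∫_{|k| ≥ 1} |k|^{2m + 2ℓ} F(k) dk. -/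
open MeasureTheory Real
open scoped ENNReal

local notation "E3" => EuclideanSpace ℝ (Fin 3)

lemma aux_pow_exp {c u : ℝ} (hc : 0 < c) (hu : 0 ≤ u) (m : ℕ) :
    u ^ m * Real.exp (-(2 * c * u)) ≤ (m.factorial : ℝ) / c ^ m * Real.exp (-(c * u)) := by
  have h := Real.pow_div_factorial_le_exp (c * u) (by positivity) m
  have h1 : u ^ m ≤ (m.factorial : ℝ) / c ^ m * Real.exp (c * u) := by
    rw [mul_pow] at h
    rw [div_le_iff₀ (by positivity : (0:ℝ) < (m.factorial : ℝ))] at h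
    rw [div_mul_eq_mul_div, le_div_iff₀ (by positivity : (0:ℝ) < c ^ m)]
    nlinarith [Real.exp_pos (c*u)]
  calc u ^ m * Real.exp (-(2 * c * u))
      ≤ ((m.factorial : ℝ) / c ^ m * Real.exp (c * u)) * Real.exp (-(2 * c * u)) := by
        apply mul_le_mul_of_nonneg_right h1 (Real.exp_pos _).le
    _ = (m.factorial : ℝ) / c ^ m * Real.exp (-(c * u)) := by
        rw [mul_assoc, ← Real.exp_add]; ring_nf

lemma aux_exp_ball {lam t r : ℝ} (hlam : 0 < lam) (ht : 0 ≤ t) (hr : 0 ≤ r) (hr1 : r ≤ 1) :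
    Real.exp (-(lam * r ^ 2 / (1 + r ^ 2) ^ 2) * t) ≤ Real.exp (-(2 * (lam/8) * (t * r ^ 2))) := by
  apply Real.exp_le_exp.mpr
  have hr2 : r ^ 2 ≤ 1 := by nlinarith
  have h4 : (1 + r ^ 2) ^ 2 ≤ 4 := by nlinarith
  have hpos : (0:ℝ) < (1 + r ^ 2) ^ 2 := by positivity
  have h5 : lam * r ^ 2 / 4 ≤ lam * r ^ 2 / (1 + r ^ 2) ^ 2 := by
    apply div_le_div_of_nonneg_left (by positivity) hpos h4
  nlinarith [mul_le_mul_of_nonneg_right h5 ht]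

-- high-frequency pointwise bound
lemma aux_high {lam l : ℝ} (hlam : 0 < lam) (hl : 0 ≤ l) (m : ℕ) :
    ∃ Ch : ℝ, 1 ≤ Ch ∧ ∀ t r : ℝ, 0 ≤ t → 1 ≤ r →
      r ^ (2 * m) * Real.exp (-(lam * r ^ 2 / (1 + r ^ 2) ^ 2) * t) ≤
        Ch * (1 + t) ^ (-l) * r ^ (2 * (m : ℝ) + 2 * l) := by
  set ε : ℝ := lam / (4 * (l + 1)) with hε
  have hεpos : 0 < ε := by positivity
  set M : ℝ := max 1 ε⁻¹ with hM
  have hM1 : 1 ≤ M := le_max_left _ _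
  have hMε : 1 ≤ M * ε := by
    rw [← inv_mul_cancel₀ hεpos.ne']
    exact mul_le_mul_of_nonneg_right (le_max_right _ _) hεpos.le
  refine ⟨M ^ l, Real.one_le_rpow hM1 hl, fun t r ht hr => ?_⟩
  have hr0 : (0:ℝ) < r := lt_of_lt_of_le one_pos hr
  set p : ℝ := lam * r ^ 2 / (1 + r ^ 2) ^ 2 with hp
  set x : ℝ := t / r ^ 2 with hx
  have hx0 : 0 ≤ x := by positivity
  -- step: (1+x)^l ≤ M^l * exp (l*ε*x)
  have s3 : 1 + x ≤ M * Real.exp (ε * x) := by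
    have := Real.add_one_le_exp (ε * x)
    nlinarith [Real.exp_pos (ε * x), mul_nonneg (mul_nonneg (sub_nonneg.2 hMε) hεpos.le) hx0]
  have s4 : (1 + x) ^ l ≤ M ^ l * Real.exp (lam / 4 * x) := by
    calc (1 + x) ^ l ≤ (M * Real.exp (ε * x)) ^ l :=
          Real.rpow_le_rpow (by positivity) s3 hl
      _ = M ^ l * Real.exp (ε * x) ^ l := Real.mul_rpow (by positivity) (Real.exp_pos _).le
      _ = M ^ l * Real.exp (ε * x * l) := by
          rw [← Real.exp_mul]
      _ ≤ M ^ l * Real.exp (lam / 4 * x) := by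
          apply mul_le_mul_of_nonneg_left _ (by positivity)
          apply Real.exp_le_exp.mpr
          have : ε * l ≤ lam / 4 := by
            rw [hε, div_mul_eq_mul_div, div_le_div_iff₀ (by positivity) (by norm_num)]
            nlinarith
          nlinarith [mul_le_mul_of_nonneg_right this hx0]
  -- step: lam/4 * x ≤ p * t
  have s5 : lam / 4 * x ≤ p * t := by
    rw [hx, hp]
    have hr2 : 1 ≤ r ^ 2 := by nlinarith
    have h1 : (1 + r ^ 2) ^ 2 ≤ 4 * r ^ 4 := by nlinarith [mul_nonneg (sub_nonneg.2 hr2) (by positivity : (0:ℝ) ≤ 3 * r ^ 2 + 1)]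
    have h2 : lam / (4 * r ^ 2) ≤ lam * r ^ 2 / (1 + r ^ 2) ^ 2 := by
      rw [div_le_div_iff₀ (by positivity) (by positivity)]
      nlinarith
    calc lam / 4 * (t / r ^ 2) = lam / (4 * r ^ 2) * t := by ring
      _ ≤ lam * r ^ 2 / (1 + r ^ 2) ^ 2 * t := mul_le_mul_of_nonneg_right h2 ht
  -- key : (1+t)^l ≤ M^l * r^(2l) * exp (p*t)
  have key : (1 + t) ^ l ≤ M ^ l * r ^ (2 * l) * Real.exp (p * t) := by
    have s1 : (1 + t : ℝ) ≤ r ^ 2 * (1 + x) := by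
      rw [hx, mul_add, mul_one, mul_div_cancel₀ _ (by positivity : (r:ℝ) ^ 2 ≠ 0)]
      nlinarith
    calc (1 + t) ^ l ≤ (r ^ 2 * (1 + x)) ^ l := Real.rpow_le_rpow (by positivity) s1 hl
      _ = r ^ (2 * l) * (1 + x) ^ l := by
          rw [Real.mul_rpow (by positivity) (by positivity), ← Real.rpow_natCast r 2,
            ← Real.rpow_mul hr0.le]
          norm_num
      _ ≤ r ^ (2 * l) * (M ^ l * Real.exp (lam / 4 * x)) :=
          mul_le_mul_of_nonneg_left s4 (by positivity)
      _ ≤ r ^ (2 * l) * (M ^ l * Real.exp (p * t)) := by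
          apply mul_le_mul_of_nonneg_left _ (by positivity)
          exact mul_le_mul_of_nonneg_left (Real.exp_le_exp.mpr s5) (by positivity)
      _ = M ^ l * r ^ (2 * l) * Real.exp (p * t) := by ring
  -- conclude
  have hrl : (0:ℝ) < r ^ (2 * l) := Real.rpow_pos_of_pos hr0 _
  have h1t : (0:ℝ) < (1 + t) ^ l := Real.rpow_pos_of_pos (by linarith) _
  have hE : Real.exp (-(p) * t) ≤ M ^ l * (1 + t) ^ (-l) * r ^ (2 * l) := by
    rw [neg_mul, Real.exp_neg, Real.rpow_neg (by linarith : (0:ℝ) ≤ 1 + t)]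
    calc (Real.exp (p * t))⁻¹
        = (1 + t) ^ l * (((1 + t) ^ l)⁻¹ * (Real.exp (p * t))⁻¹) := by
          field_simp
      _ ≤ (M ^ l * r ^ (2 * l) * Real.exp (p * t)) * (((1 + t) ^ l)⁻¹ * (Real.exp (p * t))⁻¹) :=
          mul_le_mul_of_nonneg_right key (by positivity)
      _ = M ^ l * ((1 + t) ^ l)⁻¹ * r ^ (2 * l) := by
          field_simp
  have hsplit : r ^ (2 * (m : ℝ) + 2 * l) = r ^ (2 * m) * r ^ (2 * l) := by
    rw [Real.rpow_add hr0, ← Real.rpow_natCast r (2 * m)]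
    push_cast
    ring_nf
  rw [hsplit]
  calc r ^ (2 * m) * Real.exp (-(p) * t)
      ≤ r ^ (2 * m) * (M ^ l * (1 + t) ^ (-l) * r ^ (2 * l)) :=
        mul_le_mul_of_nonneg_left hE (by positivity)
    _ = M ^ l * (1 + t) ^ (-l) * (r ^ (2 * m) * r ^ (2 * l)) := by ring

lemma aux_gauss_integrable {b : ℝ} (hb : 0 < b) :
    Integrable (fun v : E3 => Real.exp (-(b * ‖v‖ ^ 2))) := by
  have h := (GaussianFourier.integrable_cexp_neg_mul_sq_norm_add
      (V := E3) (b := (b : ℂ)) (by simpa using hb) 0 0).norm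
  convert h using 2 with v
  simp only [Complex.norm_exp]
  norm_num
  left
  norm_cast

lemma aux_gauss_lintegral {b : ℝ} (hb : 0 < b) :
    (∫⁻ v : E3, ENNReal.ofReal (Real.exp (-(b * ‖v‖ ^ 2)))) =
      ENNReal.ofReal ((π / b) ^ ((3:ℝ) / 2)) := by
  rw [← ofReal_integral_eq_lintegral_ofReal (aux_gauss_integrable hb)
      (Filter.Eventually.of_forall fun v => (Real.exp_pos _).le)]
  congr 1
  have h := GaussianFourier.integral_rexp_neg_mul_sq_norm (V := E3) hb
  simp only [finrank_euclideanSpace_fin] at h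
  norm_num at h
  rw [← h]

lemma aux_low_real {c t : ℝ} (hc : 0 < c) (ht : 1 ≤ t) (m : ℕ) :
    (m.factorial : ℝ) / (c * t) ^ m * (π / (c * t)) ^ ((3:ℝ)/2) ≤
      ((m.factorial : ℝ) / c ^ m * (π / c) ^ ((3:ℝ)/2) * 2 ^ ((m:ℝ) + 3/2)) *
        (1 + t) ^ (-(3:ℝ)/2 - (m:ℝ)) := by
  have ht0 : (0:ℝ) < t := by linarith
  have h1t : (0:ℝ) < 1 + t := by linarith
  have hπ : (0:ℝ) ≤ π / c := by positivity
  have h1 : (π / (c * t)) ^ ((3:ℝ)/2) = (π / c) ^ ((3:ℝ)/2) * (t⁻¹) ^ ((3:ℝ)/2) := by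
    rw [← Real.mul_rpow hπ (by positivity)]
    congr 1
    field_simp
  have h2 : (m.factorial : ℝ) / (c * t) ^ m =
      (m.factorial : ℝ) / c ^ m * (t⁻¹) ^ (m : ℕ) := by
    rw [mul_pow, inv_pow]
    field_simp
  rw [h1, h2]
  have h3 : t⁻¹ ≤ 2 * (1 + t)⁻¹ := by
    rw [inv_eq_one_div, show (2 * (1+t)⁻¹ : ℝ) = 2 / (1 + t) by ring,
      div_le_div_iff₀ ht0 h1t]
    linarith
  have h4 : (t⁻¹) ^ ((m:ℝ) + 3/2) ≤ 2 ^ ((m:ℝ) + 3/2) * (1 + t) ^ (-((m:ℝ) + 3/2)) := by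
    calc (t⁻¹) ^ ((m:ℝ) + 3/2) ≤ (2 * (1 + t)⁻¹) ^ ((m:ℝ) + 3/2) :=
          Real.rpow_le_rpow (by positivity) h3 (by positivity)
      _ = 2 ^ ((m:ℝ) + 3/2) * ((1 + t)⁻¹) ^ ((m:ℝ) + 3/2) :=
          Real.mul_rpow (by norm_num) (by positivity)
      _ = 2 ^ ((m:ℝ) + 3/2) * (1 + t) ^ (-((m:ℝ) + 3/2)) := by
          rw [Real.inv_rpow h1t.le, ← Real.rpow_neg h1t.le]
  have hcomb : (t⁻¹) ^ (m : ℕ) * (t⁻¹) ^ ((3:ℝ)/2) = (t⁻¹) ^ ((m:ℝ) + 3/2) := by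
    rw [← Real.rpow_natCast t⁻¹ m, ← Real.rpow_add (by positivity)]
  calc (m.factorial : ℝ) / c ^ m * (t⁻¹) ^ (m:ℕ) * ((π / c) ^ ((3:ℝ)/2) * (t⁻¹) ^ ((3:ℝ)/2))
      = (m.factorial : ℝ) / c ^ m * (π / c) ^ ((3:ℝ)/2) * ((t⁻¹) ^ (m:ℕ) * (t⁻¹) ^ ((3:ℝ)/2)) := by
        ring
    _ = (m.factorial : ℝ) / c ^ m * (π / c) ^ ((3:ℝ)/2) * (t⁻¹) ^ ((m:ℝ) + 3/2) := by
        rw [hcomb]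
    _ ≤ (m.factorial : ℝ) / c ^ m * (π / c) ^ ((3:ℝ)/2) *
          (2 ^ ((m:ℝ) + 3/2) * (1 + t) ^ (-((m:ℝ) + 3/2))) := by
        apply mul_le_mul_of_nonneg_left h4 (by positivity)
    _ = ((m.factorial : ℝ) / c ^ m * (π / c) ^ ((3:ℝ)/2) * 2 ^ ((m:ℝ) + 3/2)) *
          (1 + t) ^ (-(3:ℝ)/2 - (m:ℝ)) := by
        rw [show (-(3:ℝ)/2 - (m:ℝ)) = -((m:ℝ) + 3/2) by ring]
        ring

lemma aux_low {lam : ℝ} (hlam : 0 < lam) (m : ℕ) :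
    ∃ Cl : ℝ, 1 ≤ Cl ∧ ∀ t : ℝ, 0 ≤ t →
      (∫⁻ k in {k : E3 | ‖k‖ ≤ 1}, ENNReal.ofReal
          (‖k‖ ^ (2 * m) * Real.exp (-(lam * ‖k‖ ^ 2 / (1 + ‖k‖ ^ 2) ^ 2) * t)))
        ≤ ENNReal.ofReal (Cl * (1 + t) ^ (-(3:ℝ)/2 - (m:ℝ))) := by
  set c : ℝ := lam / 8 with hc
  have hc0 : 0 < c := by positivity
  set S : Set E3 := {k : E3 | ‖k‖ ≤ 1} with hS
  have hSball : S = Metric.closedBall (0 : E3) 1 := by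
    ext k; simp [hS, Metric.mem_closedBall, dist_zero_right]
  have hSfin : volume S ≠ ⊤ := by
    rw [hSball]; exact (measure_closedBall_lt_top).ne
  set VB : ℝ := (volume S).toReal with hVB
  have hVB0 : 0 ≤ VB := ENNReal.toReal_nonneg
  set K : ℝ := (m.factorial : ℝ) / c ^ m * (π / c) ^ ((3:ℝ)/2) * 2 ^ ((m:ℝ) + 3/2) with hK
  set Cl : ℝ := max 1 (max (VB * 2 ^ ((m:ℝ) + 3/2)) K) with hCl
  have hCl1 : 1 ≤ Cl := le_max_left _ _
  have hCl0 : 0 ≤ Cl := by linarith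
  refine ⟨Cl, hCl1, fun t ht => ?_⟩
  have h1t : (0:ℝ) < 1 + t := by linarith
  rcases le_total t 1 with htle | htge
  · -- small time
    have hb : (∫⁻ k in S, ENNReal.ofReal
          (‖k‖ ^ (2 * m) * Real.exp (-(lam * ‖k‖ ^ 2 / (1 + ‖k‖ ^ 2) ^ 2) * t)))
        ≤ volume S := by
      rw [← setLIntegral_one S]
      apply setLIntegral_mono measurable_const
      intro k hk
      have hk1 : ‖k‖ ≤ 1 := hk
      have hA : ‖k‖ ^ (2 * m) ≤ 1 := pow_le_one₀ (norm_nonneg k) hk1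
      have hB : Real.exp (-(lam * ‖k‖ ^ 2 / (1 + ‖k‖ ^ 2) ^ 2) * t) ≤ 1 := by
        apply Real.exp_le_one_iff.mpr
        have : 0 ≤ lam * ‖k‖ ^ 2 / (1 + ‖k‖ ^ 2) ^ 2 := by positivity
        nlinarith
      calc ENNReal.ofReal (‖k‖ ^ (2 * m) * Real.exp (-(lam * ‖k‖ ^ 2 / (1 + ‖k‖ ^ 2) ^ 2) * t))
          ≤ ENNReal.ofReal 1 := ENNReal.ofReal_le_ofReal
            (by nlinarith [Real.exp_pos (-(lam * ‖k‖ ^ 2 / (1 + ‖k‖ ^ 2) ^ 2) * t), pow_nonneg (norm_nonneg k) (2*m)])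
        _ = 1 := ENNReal.ofReal_one
    refine hb.trans ?_
    rw [← ENNReal.ofReal_toReal hSfin]
    apply ENNReal.ofReal_le_ofReal
    -- VB ≤ Cl * (1+t)^(-(3/2) - m)
    rw [show (-(3:ℝ)/2 - (m:ℝ)) = -((m:ℝ) + 3/2) by ring, Real.rpow_neg h1t.le]
    have hs : (0:ℝ) ≤ (m:ℝ) + 3/2 := by positivity
    have h1 : (1 + t) ^ ((m:ℝ) + 3/2) ≤ (2:ℝ) ^ ((m:ℝ) + 3/2) :=
      Real.rpow_le_rpow h1t.le (by linarith) hs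
    have h2pos : (0:ℝ) < (2:ℝ) ^ ((m:ℝ) + 3/2) := by positivity
    have h1pos : (0:ℝ) < (1 + t) ^ ((m:ℝ) + 3/2) := Real.rpow_pos_of_pos h1t _
    calc VB = (VB * 2 ^ ((m:ℝ) + 3/2)) * ((2:ℝ) ^ ((m:ℝ) + 3/2))⁻¹ := by field_simp
      _ ≤ Cl * ((2:ℝ) ^ ((m:ℝ) + 3/2))⁻¹ := by
          apply mul_le_mul_of_nonneg_right ((le_max_left _ _).trans (le_max_right _ _)) (by positivity)
      _ ≤ Cl * ((1 + t) ^ ((m:ℝ) + 3/2))⁻¹ := by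
          apply mul_le_mul_of_nonneg_left (inv_anti₀ h1pos h1) hCl0
  · -- large time
    have ht0 : (0:ℝ) < t := by linarith
    have hct : (0:ℝ) < c * t := by positivity
    set D : ℝ := (m.factorial : ℝ) / (c * t) ^ m with hD
    have hD0 : 0 ≤ D := by positivity
    have hpt : ∀ k : E3, k ∈ S →
        ‖k‖ ^ (2 * m) * Real.exp (-(lam * ‖k‖ ^ 2 / (1 + ‖k‖ ^ 2) ^ 2) * t)
          ≤ D * Real.exp (-(c * t * ‖k‖ ^ 2)) := by
      intro k hk
      have hk1 : ‖k‖ ≤ 1 := hk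
      calc ‖k‖ ^ (2 * m) * Real.exp (-(lam * ‖k‖ ^ 2 / (1 + ‖k‖ ^ 2) ^ 2) * t)
          ≤ ‖k‖ ^ (2 * m) * Real.exp (-(2 * (lam/8) * (t * ‖k‖ ^ 2))) :=
            mul_le_mul_of_nonneg_left (aux_exp_ball hlam ht (norm_nonneg k) hk1) (by positivity)
        _ = (‖k‖ ^ 2) ^ m * Real.exp (-(2 * (c * t) * (‖k‖ ^ 2))) := by
            rw [pow_mul, hc]; ring_nf
        _ ≤ (m.factorial : ℝ) / (c * t) ^ m * Real.exp (-(c * t * ‖k‖ ^ 2)) :=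
            aux_pow_exp hct (by positivity) m
    calc (∫⁻ k in S, ENNReal.ofReal
          (‖k‖ ^ (2 * m) * Real.exp (-(lam * ‖k‖ ^ 2 / (1 + ‖k‖ ^ 2) ^ 2) * t)))
        ≤ ∫⁻ k in S, ENNReal.ofReal (D * Real.exp (-(c * t * ‖k‖ ^ 2))) := by
          exact setLIntegral_mono (by fun_prop) (fun k hk => ENNReal.ofReal_le_ofReal (hpt k hk))
      _ ≤ ∫⁻ k : E3, ENNReal.ofReal (D * Real.exp (-(c * t * ‖k‖ ^ 2))) :=
          setLIntegral_le_lintegral _ _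
      _ = ENNReal.ofReal D * ∫⁻ k : E3, ENNReal.ofReal (Real.exp (-(c * t * ‖k‖ ^ 2))) := by
          simp_rw [ENNReal.ofReal_mul hD0]
          rw [lintegral_const_mul' _ _ ENNReal.ofReal_ne_top]
      _ = ENNReal.ofReal D * ENNReal.ofReal ((π / (c * t)) ^ ((3:ℝ)/2)) := by
          rw [aux_gauss_lintegral hct]
      _ = ENNReal.ofReal (D * (π / (c * t)) ^ ((3:ℝ)/2)) := (ENNReal.ofReal_mul hD0).symm
      _ ≤ ENNReal.ofReal (Cl * (1 + t) ^ (-(3:ℝ)/2 - (m:ℝ))) := by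
          apply ENNReal.ofReal_le_ofReal
          refine (aux_low_real hc0 htge m).trans ?_
          apply mul_le_mul_of_nonneg_right ((le_max_right _ _).trans (le_max_right _ _))
            (Real.rpow_nonneg h1t.le _)

/-- Frequency-splitting estimate with the dissipation weight
`p(k) = λ|k|²/(1+|k|²)²`: there is `C > 0` such that for every measurable
`F : ℝ³ → [0,∞]` and every `t ≥ 0`,
`∫ |k|^{2m} e^{-p(k)t} F(k) dk
  ≤ C (1+t)^{-3/2-m} esssup_{|k|≤1} F + C (1+t)^{-ℓ} ∫_{|k|≥1} |k|^{2m+2ℓ} F(k) dk`. -/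
theorem stmt_2 (lam : ℝ) (hlam : 0 < lam) (m : ℕ) (l : ℝ) (hl : 0 ≤ l) :
    ∃ C : ℝ, 0 < C ∧ ∀ F : EuclideanSpace ℝ (Fin 3) → ℝ≥0∞, Measurable F →
      ∀ t : ℝ, 0 ≤ t →
      (∫⁻ k, ENNReal.ofReal
            (‖k‖ ^ (2 * m) * Real.exp (-(lam * ‖k‖ ^ 2 / (1 + ‖k‖ ^ 2) ^ 2) * t)) * F k)
        ≤ ENNReal.ofReal (C * (1 + t) ^ (-(3 : ℝ) / 2 - (m : ℝ))) *
            essSup F (volume.restrict {k : EuclideanSpace ℝ (Fin 3) | ‖k‖ ≤ 1})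
          + ENNReal.ofReal (C * (1 + t) ^ (-l)) *
            ∫⁻ k in {k : EuclideanSpace ℝ (Fin 3) | 1 ≤ ‖k‖},
              ENNReal.ofReal (‖k‖ ^ (2 * (m : ℝ) + 2 * l)) * F k := by
  obtain ⟨Cl, hCl1, hlow⟩ := aux_low hlam m
  obtain ⟨Ch, hCh1, hhigh⟩ := aux_high hlam hl m
  refine ⟨max Cl Ch, lt_of_lt_of_le one_pos (hCl1.trans (le_max_left _ _)), fun F hF t ht => ?_⟩
  set C : ℝ := max Cl Ch with hC
  set S : Set E3 := {k : E3 | ‖k‖ ≤ 1} with hSdef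
  set T : Set E3 := {k : E3 | 1 ≤ ‖k‖} with hTdef
  have hST : S ∪ T = Set.univ := by
    ext k; simpa [hSdef, hTdef] using le_total ‖k‖ 1
  set g : E3 → ℝ≥0∞ := fun k => ENNReal.ofReal
      (‖k‖ ^ (2 * m) * Real.exp (-(lam * ‖k‖ ^ 2 / (1 + ‖k‖ ^ 2) ^ 2) * t)) with hg
  have hgmeas : Measurable g := by fun_prop
  have h1t : (0:ℝ) < 1 + t := by linarith
  have lowbd : (∫⁻ k in S, g k * F k) ≤
      ENNReal.ofReal (C * (1 + t) ^ (-(3:ℝ)/2 - (m:ℝ))) * essSup F (volume.restrict S) := by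
    calc (∫⁻ k in S, g k * F k)
        ≤ ∫⁻ k in S, g k * essSup F (volume.restrict S) :=
          lintegral_mono_ae ((ENNReal.ae_le_essSup F).mono fun k hk => mul_le_mul_right hk _)
      _ = (∫⁻ k in S, g k) * essSup F (volume.restrict S) := lintegral_mul_const _ hgmeas
      _ ≤ ENNReal.ofReal (Cl * (1 + t) ^ (-(3:ℝ)/2 - (m:ℝ))) * essSup F (volume.restrict S) :=
          mul_le_mul_left (hlow t ht) _
      _ ≤ ENNReal.ofReal (C * (1 + t) ^ (-(3:ℝ)/2 - (m:ℝ))) * essSup F (volume.restrict S) :=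
          mul_le_mul_left (ENNReal.ofReal_le_ofReal
            (mul_le_mul_of_nonneg_right (le_max_left _ _) (Real.rpow_nonneg h1t.le _))) _
  have highbd : (∫⁻ k in T, g k * F k) ≤
      ENNReal.ofReal (C * (1 + t) ^ (-l)) *
        ∫⁻ k in T, ENNReal.ofReal (‖k‖ ^ (2 * (m : ℝ) + 2 * l)) * F k := by
    calc (∫⁻ k in T, g k * F k)
        ≤ ∫⁻ k in T, ENNReal.ofReal (Ch * (1 + t) ^ (-l)) *
            (ENNReal.ofReal (‖k‖ ^ (2 * (m : ℝ) + 2 * l)) * F k) := by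
          refine setLIntegral_mono ?_ ?_
          · fun_prop
          · intro k hk
            rw [← mul_assoc, ← ENNReal.ofReal_mul (by positivity)]
            exact mul_le_mul_left (ENNReal.ofReal_le_ofReal (hhigh t ‖k‖ ht hk)) _
      _ = ENNReal.ofReal (Ch * (1 + t) ^ (-l)) *
            ∫⁻ k in T, ENNReal.ofReal (‖k‖ ^ (2 * (m : ℝ) + 2 * l)) * F k :=
          lintegral_const_mul' _ _ ENNReal.ofReal_ne_top
      _ ≤ ENNReal.ofReal (C * (1 + t) ^ (-l)) *
            ∫⁻ k in T, ENNReal.ofReal (‖k‖ ^ (2 * (m : ℝ) + 2 * l)) * F k :=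
          mul_le_mul_left (ENNReal.ofReal_le_ofReal
            (mul_le_mul_of_nonneg_right (le_max_right _ _) (Real.rpow_nonneg h1t.le _))) _
  calc (∫⁻ k, g k * F k) = ∫⁻ k in S ∪ T, g k * F k := by
        rw [hST, setLIntegral_univ]
    _ ≤ (∫⁻ k in S, g k * F k) + ∫⁻ k in T, g k * F k := lintegral_union_le _ _ _
    _ ≤ _ := add_le_add lowbd highbd
end

section
/- Let k ∈ ℝ³, regarded as an element of ℂ³. Suppose Ê, B̂ : [0, ∞) → ℂ³ are differentiable and Ĝ : [0, ∞) → ℂ³ satisfies, for every t ≥ 0, ∂ₜÊ(t) − i k × B̂(t) = −Ĝ(t) and ∂ₜB̂(t) + i k × Ê(t) = 0. Then for every t ≥ 0, d/dt ( (−i k × B̂(t) | Ê(t)) ) + |k × B̂(t)|² = |k × Ê(t)|² + (i k × B̂(t) | Ĝ(t)). -/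
open Complex Set

/-- The ℂ-bilinear cross product on ℂ³. -/
def cross3 (a b : Fin 3 → ℂ) : Fin 3 → ℂ :=
  ![a 1 * b 2 - a 2 * b 1, a 2 * b 0 - a 0 * b 2, a 0 * b 1 - a 1 * b 0]

/-- The Hermitian dot product `(a | b) = Σⱼ aⱼ conj(bⱼ)` on ℂ³. -/
noncomputable def herm (a b : Fin 3 → ℂ) : ℂ := ∑ j : Fin 3, a j * (starRingEnd ℂ) (b j)

/-- A real vector `k ∈ ℝ³` regarded as an element of ℂ³. -/
def cvec (k : Fin 3 → ℝ) : Fin 3 → ℂ := fun j => (k j : ℂ)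

/-- Electromagnetic dissipation identity: for the Fourier–Maxwell system
`∂ₜÊ − ik×B̂ = −Ĝ`, `∂ₜB̂ + ik×Ê = 0`, one has for every `t ≥ 0`
`d/dt (−ik×B̂ | Ê) + |k×B̂|² = |k×Ê|² + (ik×B̂ | Ĝ)`. -/
theorem stmt_17 (k : Fin 3 → ℝ) (E B E' B' G : ℝ → Fin 3 → ℂ)
    (hE : ∀ t ∈ Set.Ici (0 : ℝ), HasDerivWithinAt E (E' t) (Set.Ici 0) t)
    (hB : ∀ t ∈ Set.Ici (0 : ℝ), HasDerivWithinAt B (B' t) (Set.Ici 0) t)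
    (hMax1 : ∀ t ∈ Set.Ici (0 : ℝ),
      E' t - Complex.I • cross3 (cvec k) (B t) = -G t)
    (hMax2 : ∀ t ∈ Set.Ici (0 : ℝ),
      B' t + Complex.I • cross3 (cvec k) (E t) = 0) :
    ∀ t ∈ Set.Ici (0 : ℝ),
      HasDerivWithinAt
        (fun s => herm ((-Complex.I) • cross3 (cvec k) (B s)) (E s))
        (((∑ j : Fin 3, ‖cross3 (cvec k) (E t) j‖ ^ 2 : ℝ) : ℂ)
          + herm (Complex.I • cross3 (cvec k) (B t)) (G t)
          - ((∑ j : Fin 3, ‖cross3 (cvec k) (B t) j‖ ^ 2 : ℝ) : ℂ))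
        (Set.Ici 0) t := by
  intro t ht
  have hBc : ∀ j, HasDerivWithinAt (fun s => B s j) (B' t j) (Set.Ici 0) t :=
    hasDerivWithinAt_pi.1 (hB t ht)
  have hEc : ∀ j, HasDerivWithinAt (fun s => E s j) (E' t j) (Set.Ici 0) t :=
    hasDerivWithinAt_pi.1 (hE t ht)
  -- componentwise derivative of k × B
  have hcB : ∀ j, HasDerivWithinAt (fun s => cross3 (cvec k) (B s) j)
      (cross3 (cvec k) (B' t) j) (Set.Ici 0) t := by
    intro j
    fin_cases j <;> simp only [cross3, cvec, Matrix.cons_val_zero, Matrix.cons_val_one,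
      Matrix.head_cons, Matrix.cons_val_two, Matrix.tail_cons] <;>
      exact (((hBc _).const_mul _).sub ((hBc _).const_mul _))
  have key : ∀ j, HasDerivWithinAt
      (fun s => (-Complex.I) * cross3 (cvec k) (B s) j * (starRingEnd ℂ) (E s j))
      ((-Complex.I) * cross3 (cvec k) (B' t) j * (starRingEnd ℂ) (E t j)
        + (-Complex.I) * cross3 (cvec k) (B t) j * (starRingEnd ℂ) (E' t j))
      (Set.Ici 0) t := by
    intro j
    have h1 : HasDerivWithinAt (fun s => (-Complex.I) * cross3 (cvec k) (B s) j)
        ((-Complex.I) * cross3 (cvec k) (B' t) j) (Set.Ici 0) t := (hcB j).const_mul _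
    have h2 : HasDerivWithinAt (fun s => (starRingEnd ℂ) (E s j))
        ((starRingEnd ℂ) (E' t j)) (Set.Ici 0) t := (hEc j).star
    exact h1.mul h2
  have hsum : HasDerivWithinAt
      (fun s => ∑ j : Fin 3, (-Complex.I) * cross3 (cvec k) (B s) j * (starRingEnd ℂ) (E s j))
      (∑ j : Fin 3, ((-Complex.I) * cross3 (cvec k) (B' t) j * (starRingEnd ℂ) (E t j)
        + (-Complex.I) * cross3 (cvec k) (B t) j * (starRingEnd ℂ) (E' t j)))
      (Set.Ici 0) t := HasDerivWithinAt.fun_sum (fun j _ => key j)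
  have hfun : (fun s => herm ((-Complex.I) • cross3 (cvec k) (B s)) (E s))
      = fun s => ∑ j : Fin 3, (-Complex.I) * cross3 (cvec k) (B s) j * (starRingEnd ℂ) (E s j) := by
    funext s; simp [herm, Pi.smul_apply, smul_eq_mul]
  rw [hfun]
  convert hsum using 1
  -- now the algebraic identity
  have hB' : B' t = -(Complex.I • cross3 (cvec k) (E t)) :=
    eq_neg_of_add_eq_zero_left (hMax2 t ht)
  have hE' : E' t = Complex.I • cross3 (cvec k) (B t) - G t := by
    have h := hMax1 t ht
    have := sub_eq_iff_eq_add.mp h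
    rw [this]; ring
  rw [hB', hE']
  simp only [herm, cross3, cvec, Fin.sum_univ_three, Matrix.cons_val_zero, Matrix.cons_val_one,
    Matrix.head_cons, Matrix.cons_val_two, Matrix.tail_cons, Pi.smul_apply, Pi.neg_apply,
    Pi.sub_apply, smul_eq_mul, map_mul, map_sub, map_add, map_neg, Complex.conj_ofReal,
    Complex.conj_I, Complex.sq_norm, Complex.normSq_eq_conj_mul_self]
  push_cast
  simp only [Complex.normSq_eq_conj_mul_self, map_mul, map_sub, map_add, map_neg,
    Complex.conj_ofReal, Complex.conj_I]
  ring_nf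
  simp only [Complex.I_sq]
  ring
end

section
/- Let k ∈ ℝ³, regarded as an element of ℂ³. Suppose â : [0, ∞) → ℂ and Ĝ : [0, ∞) → ℂ³ are differentiable, Ê, Ĥ : [0, ∞) → ℂ³, and for every t ≥ 0: ∂ₜâ(t) + i k·Ĝ(t) = 0, ∂ₜĜ(t) + i k â(t) − 2 Ê(t) + Ĥ(t) = 0, and i k·Ê(t) = â(t) (where k·v = Σⱼ kⱼ vⱼ is the bilinear dot product). Then for every t ≥ 0, d/dt ( (Ĝ(t) | i k â(t)) ) + (2 + |k|²) |â(t)|² = (Ĝ(t) | k (k·Ĝ(t))) − (Ĥ(t) | i k â(t)). -/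
open Complex Set

set_option maxRecDepth 20000 in
set_option maxHeartbeats 1000000 in
/-- Macroscopic dissipation identity: if `∂ₜâ + ik·Ĝ = 0`,
`∂ₜĜ + ikâ − 2Ê + Ĥ = 0` and `ik·Ê = â`, then for every `t ≥ 0`
`d/dt (Ĝ | ikâ) + (2 + |k|²)|â|² = (Ĝ | k(k·Ĝ)) − (Ĥ | ikâ)`. -/
theorem stmt_18 (k : Fin 3 → ℝ) (a a' : ℝ → ℂ) (G G' E H : ℝ → Fin 3 → ℂ)
    (ha : ∀ t ∈ Set.Ici (0 : ℝ), HasDerivWithinAt a (a' t) (Set.Ici 0) t)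
    (hG : ∀ t ∈ Set.Ici (0 : ℝ), HasDerivWithinAt G (G' t) (Set.Ici 0) t)
    (heq1 : ∀ t ∈ Set.Ici (0 : ℝ),
      a' t + Complex.I * (∑ j : Fin 3, cvec k j * G t j) = 0)
    (heq2 : ∀ t ∈ Set.Ici (0 : ℝ), ∀ j : Fin 3,
      G' t j + Complex.I * cvec k j * a t - 2 * E t j + H t j = 0)
    (heq3 : ∀ t ∈ Set.Ici (0 : ℝ),
      Complex.I * (∑ j : Fin 3, cvec k j * E t j) = a t) :
    ∀ t ∈ Set.Ici (0 : ℝ),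
      HasDerivWithinAt
        (fun s => herm (G s) (fun j => Complex.I * cvec k j * a s))
        (herm (G t) (fun j => cvec k j * (∑ m : Fin 3, cvec k m * G t m))
          - herm (H t) (fun j => Complex.I * cvec k j * a t)
          - (((2 : ℝ) + ∑ j : Fin 3, (k j) ^ 2 : ℝ) : ℂ) * (Complex.normSq (a t) : ℂ))
        (Set.Ici 0) t := by
  intro t ht
  have hD : HasDerivWithinAt
      (fun s => herm (G s) (fun j => Complex.I * cvec k j * a s))
      (∑ j : Fin 3, (G' t j * (starRingEnd ℂ) (Complex.I * cvec k j * a t)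
        + G t j * (starRingEnd ℂ) (Complex.I * cvec k j * a' t))) (Set.Ici 0) t := by
    simp only [herm]
    apply HasDerivWithinAt.fun_sum
    intro j _
    have h1 : HasDerivWithinAt (fun s => G s j) (G' t j) (Set.Ici 0) t :=
      (hasDerivWithinAt_pi.mp (hG t ht)) j
    have h2 : HasDerivWithinAt (fun s => (starRingEnd ℂ) (Complex.I * cvec k j * a s))
        ((starRingEnd ℂ) (Complex.I * cvec k j * a' t)) (Set.Ici 0) t := by
      exact ((ha t ht).const_mul (Complex.I * cvec k j)).star
    exact h1.mul h2
  convert hD using 1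
  have e1 := heq1 t ht
  have e1c := congrArg (starRingEnd ℂ) e1
  have e20 := heq2 t ht 0
  have e21 := heq2 t ht 1
  have e22 := heq2 t ht 2
  have e3 := heq3 t ht
  simp only [cvec, Fin.sum_univ_three] at e20 e21 e22 e3
  simp only [map_add, map_mul, map_sum, map_zero, cvec, Fin.sum_univ_three,
    Complex.conj_I, Complex.conj_ofReal] at e1c
  simp only [herm, cvec, Fin.sum_univ_three]
  simp only [map_mul, map_sum, map_add, Complex.conj_I, Complex.conj_ofReal, Fin.sum_univ_three]
  rw [← Complex.mul_conj (a t)]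
  push_cast
  set c := (starRingEnd ℂ) (a t)
  set c' := (starRingEnd ℂ) (a' t)
  set C0 := (starRingEnd ℂ) (G t 0)
  set C1 := (starRingEnd ℂ) (G t 1)
  set C2 := (starRingEnd ℂ) (G t 2)
  linear_combination (Complex.I * (k 0 : ℂ) * c) * e20
    + (Complex.I * (k 1 : ℂ) * c) * e21
    + (Complex.I * (k 2 : ℂ) * c) * e22
    + (Complex.I * ((k 0 : ℂ) * G t 0 + (k 1 : ℂ) * G t 1 + (k 2 : ℂ) * G t 2)) * e1c
    + (2 * c) * e3
    + (((k 0 : ℂ) * G t 0 + (k 1 : ℂ) * G t 1 + (k 2 : ℂ) * G t 2)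
        * ((k 0 : ℂ) * C0 + (k 1 : ℂ) * C1 + (k 2 : ℂ) * C2)
      - ((k 0 : ℂ) ^ 2 + (k 1 : ℂ) ^ 2 + (k 2 : ℂ) ^ 2) * a t * c) * Complex.I_sq
end
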